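/- Fix an integer k ≥ 1 and a partition M of {1, …, 2k} into k unordered pairs (a perfect matching). For N ≥ 2 let T_N(M) be the number of tuples (i_1, …, i_{2k}) ∈ {1, …, N}^{2k} (with the convention i_{2k+1} = i_1) such that for every pair {m, n} ∈ M there exists C ∈ {0, N−1, −(N−1)} with i_{m+1} − i_m = −(i_{n+1} − i_n) + C. Then there is a constant C_k, depending only on k, with |T_N(M) − N^{k+1}| ≤ C_k · N^k for all N. Consequently each of the (2k−1)!! perfect matchings contributes exactly 1 to the limiting 2k-th spectral moment, so M_{2k} = (2k−1)!!, the 2k-th moment of the standard Gaussian density. -/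

import Mathlib

open Finset
open scoped Classical

noncomputable section

def cyc {n : ℕ} (m : Fin n) : Fin n := ⟨(m.val + 1) % n, Nat.mod_lt _ m.pos⟩

/-- partial sums -/
def psum {n : ℕ} {α : Type*} [AddCommMonoid α] (d : Fin n → α) (m : Fin n) : α :=
  ∑ r : Fin n, if r.val < m.val then d r else 0

lemma psum_zero {n : ℕ} {α : Type*} [AddCommMonoid α] (d : Fin n → α) (m : Fin n)
    (h : m.val = 0) : psum d m = 0 := by
  unfold psum
  apply Finset.sum_eq_zero
  intro r _
  rw [h]
  simp

lemma psum_succ {n : ℕ} {α : Type*} [AddCommMonoid α] (d : Fin n → α) (m : Fin n)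
    (h : m.val + 1 < n) : psum d ⟨m.val + 1, h⟩ = psum d m + d m := by
  unfold psum
  have : ∀ r : Fin n, (if r.val < m.val + 1 then d r else 0)
      = (if r.val < m.val then d r else 0) + (if r = m then d r else 0) := by
    intro r
    by_cases h1 : r = m
    · subst h1; simp
    · have h2 : r.val ≠ m.val := fun hc => h1 (Fin.ext hc)
      by_cases h3 : r.val < m.val
      · rw [if_pos (by omega), if_pos h3, if_neg h1, add_zero]
      · rw [if_neg (by omega), if_neg h3, if_neg h1, add_zero]
  rw [Finset.sum_congr rfl (fun r _ => this r), Finset.sum_add_distrib]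
  congr 1
  simp

lemma psum_last {n : ℕ} {α : Type*} [AddCommGroup α] (d : Fin n → α) (m : Fin n)
    (h : m.val + 1 = n) : psum d m = (∑ r : Fin n, d r) - d m := by
  unfold psum
  have : ∀ r : Fin n, (if r.val < m.val then d r else 0)
      = d r - (if r = m then d r else 0) := by
    intro r
    by_cases h1 : r = m
    · subst h1; simp
    · have h2 : r.val ≠ m.val := fun hc => h1 (Fin.ext hc)
      have h3 : r.val < m.val := by omega
      rw [if_pos h3, if_neg h1, sub_zero]
  rw [Finset.sum_congr rfl (fun r _ => this r), Finset.sum_sub_distrib]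
  congr 1
  simp

lemma cyc_of_lt {n : ℕ} (m : Fin n) (h : m.val + 1 < n) : cyc m = ⟨m.val + 1, h⟩ := by
  unfold cyc
  exact Fin.ext (Nat.mod_eq_of_lt h)

lemma cyc_of_last {n : ℕ} (m : Fin n) (h : m.val + 1 = n) (h0 : 0 < n) :
    cyc m = ⟨0, h0⟩ := by
  apply Fin.ext
  show (m.val + 1) % n = 0
  rw [h]
  exact Nat.mod_self n

/-- reconstruction: any function equals its value at 0 plus partial sums of differences -/
lemma reconstruct {n : ℕ} {α : Type*} [AddCommGroup α] (j : Fin n → α) (h0 : 0 < n)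
    (m : Fin n) : j m = j ⟨0, h0⟩ + psum (fun r => j (cyc r) - j r) m := by
  obtain ⟨v, hv⟩ := m
  induction v with
  | zero => rw [psum_zero _ _ rfl, add_zero]
  | succ w ih =>
    have hw : w < n := by omega
    have hcyc : cyc ⟨w, hw⟩ = ⟨w + 1, hv⟩ := cyc_of_lt _ hv
    have : j ⟨w+1, hv⟩ = j ⟨w, hw⟩ + ((fun r => j (cyc r) - j r) ⟨w, hw⟩) := by
      simp [hcyc]
    rw [this, ih hw, psum_succ _ ⟨w, hw⟩ hv, add_assoc]
section matching
variable {k : ℕ} (σ : Equiv.Perm (Fin (2 * k)))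

/-- representatives of the pairs: smaller element of each pair -/
def Rset : Finset (Fin (2 * k)) := univ.filter (fun m => m < σ m)

variable (hinv : ∀ m, σ (σ m) = m) (hnfix : ∀ m, σ m ≠ m)
include hinv hnfix

lemma not_mem_Rset_iff (m : Fin (2 * k)) : m ∉ Rset σ ↔ σ m < m := by
  simp only [Rset, Finset.mem_filter, Finset.mem_univ, true_and, not_lt]
  constructor
  · intro h; exact lt_of_le_of_ne h (hnfix m)
  · intro h; exact le_of_lt h

lemma sigma_mem_Rset {m : Fin (2 * k)} (h : m ∉ Rset σ) : σ m ∈ Rset σ := by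
  rw [not_mem_Rset_iff σ hinv hnfix] at h
  simp only [Rset, Finset.mem_filter, Finset.mem_univ, true_and]
  rw [hinv]; exact h

lemma sigma_not_mem_Rset {m : Fin (2 * k)} (h : m ∈ Rset σ) : σ m ∉ Rset σ := by
  rw [not_mem_Rset_iff σ hinv hnfix, hinv]
  simpa only [Rset, Finset.mem_filter, Finset.mem_univ, true_and] using h

lemma card_Rset : (Rset σ).card = k := by
  have himg : (Rset σ).image σ = univ.filter (fun m => σ m < m) := by
    ext m
    simp only [Finset.mem_image, Rset, Finset.mem_filter, Finset.mem_univ, true_and]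
    constructor
    · rintro ⟨a, ha, rfl⟩; rw [hinv]; exact ha
    · intro h; exact ⟨σ m, by rw [hinv]; exact h, hinv m⟩
  have h1 : (univ.filter (fun m : Fin (2 * k) => σ m < m)).card = (Rset σ).card := by
    rw [← himg, Finset.card_image_of_injective _ σ.injective]
  have h2 : (Rset σ).card + (univ.filter (fun m : Fin (2 * k) => ¬ m < σ m)).card = 2 * k := by
    rw [Rset, Finset.card_filter_add_card_filter_not]
    simp
  have h3 : (univ.filter (fun m : Fin (2 * k) => ¬ m < σ m))
      = univ.filter (fun m : Fin (2 * k) => σ m < m) := by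
    apply Finset.filter_congr
    intro m _
    simp only [not_lt, eq_iff_iff]
    constructor
    · intro h; exact lt_of_le_of_ne h (hnfix m)
    · intro h; exact le_of_lt h
  rw [h3, h1] at h2
  omega

end matching
section solutions
variable {k : ℕ} (σ : Equiv.Perm (Fin (2 * k))) (q : ℕ) [NeZero q]

/-- solutions of the congruence system mod q -/
def Sset : Finset (Fin (2 * k) → ZMod q) :=
  univ.filter (fun j => ∀ m, (j (cyc m) - j m) + (j (cyc (σ m)) - j (σ m)) = 0)

lemma mem_Sset_iff (j : Fin (2 * k) → ZMod q) :
    j ∈ Sset σ q ↔ ∀ m, (j (cyc m) - j m) + (j (cyc (σ m)) - j (σ m)) = 0 := by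
  simp [Sset]

/-- the difference function built from values on representatives -/
def dfun (x : {m // m ∈ Rset σ} → ZMod q) (r : Fin (2 * k)) : ZMod q :=
  if h : r ∈ Rset σ then x ⟨r, h⟩
  else if h2 : σ r ∈ Rset σ then - x ⟨σ r, h2⟩ else 0

variable (hinv : ∀ m, σ (σ m) = m) (hnfix : ∀ m, σ m ≠ m)
include hinv hnfix

lemma dfun_pair (x : {m // m ∈ Rset σ} → ZMod q) (m : Fin (2 * k)) :
    dfun σ q x m + dfun σ q x (σ m) = 0 := by
  by_cases h : m ∈ Rset σ
  · have h1 : σ m ∉ Rset σ := sigma_not_mem_Rset σ hinv hnfix h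
    have h2 : σ (σ m) ∈ Rset σ := by rw [hinv]; exact h
    rw [dfun, dif_pos h, dfun, dif_neg h1, dif_pos h2]
    have : (⟨σ (σ m), h2⟩ : {m // m ∈ Rset σ}) = ⟨m, h⟩ := Subtype.ext (hinv m)
    rw [this, add_neg_cancel]
  · have h1 : σ m ∈ Rset σ := sigma_mem_Rset σ hinv hnfix h
    rw [dfun, dif_neg h, dif_pos h1, dfun, dif_pos h1, neg_add_cancel]

lemma dfun_sum (x : {m // m ∈ Rset σ} → ZMod q) :
    ∑ r : Fin (2 * k), dfun σ q x r = 0 := by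
  classical
  set g : Fin (2 * k) → ZMod q := fun m => if h : m ∈ Rset σ then x ⟨m, h⟩ else 0 with hg
  have key : ∀ r, dfun σ q x r = g r - g (σ r) := by
    intro r
    by_cases h : r ∈ Rset σ
    · have h1 : σ r ∉ Rset σ := sigma_not_mem_Rset σ hinv hnfix h
      rw [dfun, dif_pos h, hg]
      simp only [dif_pos h, dif_neg h1, sub_zero]
    · have h1 : σ r ∈ Rset σ := sigma_mem_Rset σ hinv hnfix h
      rw [dfun, dif_neg h, dif_pos h1, hg]
      simp only [dif_neg h, dif_pos h1, zero_sub]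
  rw [Finset.sum_congr rfl (fun r _ => key r), Finset.sum_sub_distrib]
  rw [Equiv.sum_comp σ g]
  exact sub_self _
end solutions
lemma Gdiff {n : ℕ} {α : Type*} [AddCommGroup α] (a : α) (d : Fin n → α)
    (hsum : ∑ r : Fin n, d r = 0) (h0 : 0 < n) (m : Fin n) :
    (a + psum d (cyc m)) - (a + psum d m) = d m := by
  by_cases h : m.val + 1 < n
  · rw [cyc_of_lt m h, psum_succ d m h]; abel
  · have hl : m.val + 1 = n := by have := m.isLt; omega
    rw [cyc_of_last m hl h0, psum_zero d ⟨0, h0⟩ rfl, psum_last d m hl, hsum]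
    abel

section cardS
variable {k : ℕ} (σ : Equiv.Perm (Fin (2 * k))) (q : ℕ) [NeZero q]
variable (hinv : ∀ m, σ (σ m) = m) (hnfix : ∀ m, σ m ≠ m)
include hinv hnfix

lemma card_Sset (hk : 1 ≤ k) : (Sset σ q).card = q ^ (k + 1) := by
  classical
  have h0 : 0 < 2 * k := by omega
  have hcard : (univ : Finset (ZMod q × ({m // m ∈ Rset σ} → ZMod q))).card = q ^ (k + 1) := by
    rw [Finset.card_univ, Fintype.card_prod, Fintype.card_fun, Fintype.card_coe,
      card_Rset σ hinv hnfix, ZMod.card, pow_succ]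
    ring
  rw [← hcard]
  apply Finset.card_bij'
    (i := fun j _ => ((j ⟨0, h0⟩, fun r => j (cyc r.1) - j r.1) :
        ZMod q × ({m // m ∈ Rset σ} → ZMod q)))
    (j := fun p _ => fun m => p.1 + psum (dfun σ q p.2) m)
  · intro j hj
    exact Finset.mem_univ _
  · intro p hp
    rw [mem_Sset_iff]
    intro m
    have hG : ∀ m', ((fun m => p.1 + psum (dfun σ q p.2) m) (cyc m'))
        - ((fun m => p.1 + psum (dfun σ q p.2) m) m') = dfun σ q p.2 m' :=
      fun m' => Gdiff p.1 _ (dfun_sum σ q hinv hnfix p.2) h0 m'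
    simp only at hG
    rw [hG m, hG (σ m)]
    exact dfun_pair σ q hinv hnfix p.2 m
  · intro j hj
    -- G (F j) = j
    rw [mem_Sset_iff] at hj
    set x : {m // m ∈ Rset σ} → ZMod q := fun r => j (cyc r.1) - j r.1 with hx
    have hd : dfun σ q x = fun r => j (cyc r) - j r := by
      funext r
      by_cases h : r ∈ Rset σ
      · rw [dfun, dif_pos h]
      · have h1 : σ r ∈ Rset σ := sigma_mem_Rset σ hinv hnfix h
        rw [dfun, dif_neg h, dif_pos h1, hx]
        simp only
        have := hj r
        linear_combination -this
    funext m
    simp only [hd]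
    exact (reconstruct j h0 m).symm
  · intro p hp
    -- F (G p) = p
    have hG : ∀ m, ((fun m => p.1 + psum (dfun σ q p.2) m) (cyc m))
        - ((fun m => p.1 + psum (dfun σ q p.2) m) m) = dfun σ q p.2 m :=
      fun m => Gdiff p.1 _ (dfun_sum σ q hinv hnfix p.2) h0 m
    have h1 : p.1 + psum (dfun σ q p.2) ⟨0, h0⟩ = p.1 := by
      rw [psum_zero _ _ rfl, add_zero]
    refine Prod.ext h1 ?_
    funext r
    simp only
    rw [hG r.1]
    rw [dfun, dif_pos r.2]

end cardS
section cardSzero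
variable {k : ℕ} (σ : Equiv.Perm (Fin (2 * k))) (q : ℕ) [NeZero q]
variable (hinv : ∀ m, σ (σ m) = m) (hnfix : ∀ m, σ m ≠ m)
include hinv hnfix

lemma dfun_of_sol (j : Fin (2 * k) → ZMod q) (hj : j ∈ Sset σ q) :
    dfun σ q (fun r : {m // m ∈ Rset σ} => j (cyc r.1) - j r.1)
      = fun r => j (cyc r) - j r := by
  rw [mem_Sset_iff] at hj
  funext r
  by_cases h : r ∈ Rset σ
  · rw [dfun, dif_pos h]
  · have h1 : σ r ∈ Rset σ := sigma_mem_Rset σ hinv hnfix h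
    rw [dfun, dif_neg h, dif_pos h1]
    simp only
    have := hj r
    linear_combination -this

lemma card_Sset_zero (hk : 1 ≤ k) (m0 : Fin (2 * k)) :
    ((Sset σ q).filter (fun j => j m0 = 0)).card ≤ q ^ k := by
  classical
  have h0 : 0 < 2 * k := by omega
  have hcard : (univ : Finset ({m // m ∈ Rset σ} → ZMod q)).card = q ^ k := by
    rw [Finset.card_univ, Fintype.card_fun, Fintype.card_coe, card_Rset σ hinv hnfix, ZMod.card]
  rw [← hcard]
  apply Finset.card_le_card_of_injOn
    (fun j => fun r : {m // m ∈ Rset σ} => j (cyc r.1) - j r.1)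
    (fun j _ => Finset.mem_univ _)
  intro j hj j' hj' hf
  simp only [Finset.coe_filter, Set.mem_setOf_eq] at hj hj'
  obtain ⟨hjS, hj0⟩ := hj
  obtain ⟨hj'S, hj'0⟩ := hj'
  have hD : (fun r => j (cyc r) - j r) = (fun r => j' (cyc r) - j' r) := by
    rw [← dfun_of_sol σ q hinv hnfix j hjS, ← dfun_of_sol σ q hinv hnfix j' hj'S]
    exact congrArg _ hf
  have hz : j ⟨0, h0⟩ = j' ⟨0, h0⟩ := by
    have r1 := reconstruct j h0 m0
    have r2 := reconstruct j' h0 m0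
    rw [hj0] at r1
    rw [hj'0] at r2
    rw [hD] at r1
    linear_combination r2 - r1
  funext m
  rw [reconstruct j h0 m, reconstruct j' h0 m, hz, hD]

end cardSzero

lemma pow_gap (q k : ℕ) : (q + 1) ^ (k + 1) ≤ q ^ (k + 1) + (k + 1) * (q + 1) ^ k := by
  induction k with
  | zero => simp
  | succ k ih =>
    have hle : q ^ (k + 1) ≤ (q + 1) ^ (k + 1) := Nat.pow_le_pow_left (by omega) _
    calc (q + 1) ^ (k + 2) = (q + 1) ^ (k + 1) * (q + 1) := by ring
      _ ≤ (q ^ (k + 1) + (k + 1) * (q + 1) ^ k) * (q + 1) := Nat.mul_le_mul_right _ ih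
      _ = q ^ (k + 1) * q + q ^ (k + 1) + (k + 1) * ((q + 1) ^ k * (q + 1)) := by ring
      _ = q ^ (k + 2) + q ^ (k + 1) + (k + 1) * (q + 1) ^ (k + 1) := by ring_nf
      _ ≤ q ^ (k + 2) + (q + 1) ^ (k + 1) + (k + 1) * (q + 1) ^ (k + 1) := by
          omega
      _ = q ^ (k + 2) + (k + 2) * (q + 1) ^ (k + 1) := by ring
set_option maxHeartbeats 2000000 in
/-- Each matching (with all minus signs) contributes fully: fix `k ≥ 1` and a perfect
matching of `{1,…,2k}` (encoded as a fixed-point-free involution `σ`).  Let `T_N` be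
the number of tuples `(i_1,…,i_{2k}) ∈ {1,…,N}^{2k}` (cyclically, `i_{2k+1} = i_1`)
such that for every pair `{m, σ m}` there is `C ∈ {0, N-1, -(N-1)}` with
`i_{m+1} - i_m = -(i_{σm+1} - i_{σm}) + C`.  Then `|T_N - N^{k+1}| ≤ C_k N^k`; hence
each of the `(2k-1)!!` matchings contributes exactly `1` to the limiting `2k`-th
spectral moment, so `M_{2k} = (2k-1)!!`. -/
theorem matching_contributes_one
    (k : ℕ) (hk : 1 ≤ k)
    (σ : Equiv.Perm (Fin (2 * k)))
    (hinv : ∀ m, σ (σ m) = m) (hnfix : ∀ m, σ m ≠ m) :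
    ∃ C : ℝ, ∀ N : ℕ, 2 ≤ N →
      |(((Finset.univ.filter (fun i : Fin (2 * k) → Fin N =>
            ∀ m : Fin (2 * k), ∃ c : ℤ,
              (c = 0 ∨ c = (N : ℤ) - 1 ∨ c = -((N : ℤ) - 1)) ∧
                ((i (cyc m)).val : ℤ) - ((i m).val : ℤ)
                  = -(((i (cyc (σ m))).val : ℤ) - ((i (σ m)).val : ℤ)) + c)).card : ℝ)
          - (N : ℝ) ^ (k + 1))|
        ≤ C * (N : ℝ) ^ k := by
  classical
  refine ⟨((2 * k * 2 ^ (2 * k) + (k + 1) : ℕ) : ℝ), ?_⟩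
  intro N hN
  set Ctot : ℕ := 2 * k * 2 ^ (2 * k) + (k + 1) with hCtot
  set q : ℕ := N - 1 with hqdef
  haveI : NeZero q := ⟨by omega⟩
  have hq1 : 1 ≤ q := by omega
  have hNq : N = q + 1 := by omega
  have h0 : 0 < 2 * k := by omega
  set T := Finset.univ.filter (fun i : Fin (2 * k) → Fin N =>
            ∀ m : Fin (2 * k), ∃ c : ℤ,
              (c = 0 ∨ c = (N : ℤ) - 1 ∨ c = -((N : ℤ) - 1)) ∧
                ((i (cyc m)).val : ℤ) - ((i m).val : ℤ)
                  = -(((i (cyc (σ m))).val : ℤ) - ((i (σ m)).val : ℤ)) + c) with hTdef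
  set π : (Fin (2 * k) → Fin N) → (Fin (2 * k) → ZMod q) :=
    fun i m => ((i m).val : ZMod q) with hπ
  have hcast : ((N : ℤ) - 1) = (q : ℤ) := by omega
  have hqleN : q ≤ N := by omega
  clear_value Ctot q T π
  -- (1) π maps T into the solution set
  have hmapS : ∀ i ∈ T, π i ∈ Sset σ q := by
    intro i hi
    rw [hTdef, Finset.mem_filter] at hi
    rw [mem_Sset_iff]
    intro m
    obtain ⟨c, hc, heq⟩ := hi.2 m
    have hc0 : ((c : ℤ) : ZMod q) = 0 := by
      rw [ZMod.intCast_zmod_eq_zero_iff_dvd]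
      rcases hc with rfl | rfl | rfl
      · exact dvd_zero _
      · rw [hcast]
      · rw [hcast]
        exact dvd_neg.mpr dvd_rfl
    have h2 := congrArg (fun z : ℤ => (z : ZMod q)) heq
    push_cast at h2
    simp only [hπ]
    linear_combination h2 + hc0
  -- (2) key: values of lifts
  have hkey : ∀ (a : Fin N) (v : ZMod q), ((a.val : ZMod q) = v) →
      a.val = v.val ∨ a.val = v.val + q := by
    intro a v h
    have h1 : a.val % q = v.val := by rw [← ZMod.val_natCast, h]
    have h2 : a.val < q + 1 := by have := a.isLt; omega
    rcases Nat.lt_or_ge a.val q with hlt | hge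
    · left
      rw [← h1, Nat.mod_eq_of_lt hlt]
    · have ha : a.val = q := by omega
      right
      rw [ha] at h1 ⊢
      rw [Nat.mod_self] at h1
      omega
  -- (3) fibers of π have size ≤ 2^(2k)
  have hfiber : ∀ j : Fin (2 * k) → ZMod q,
      (T.filter (fun i => π i = j)).card ≤ 2 ^ (2 * k) := by
    intro j
    have hcard2 : (univ : Finset (Fin (2 * k) → Bool)).card = 2 ^ (2 * k) := by
      rw [Finset.card_univ, Fintype.card_fun, Fintype.card_bool, Fintype.card_fin]
    rw [← hcard2]
    apply Finset.card_le_card_of_injOn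
      (fun i => fun m => decide ((i m).val = (j m).val)) (fun i _ => Finset.mem_univ _)
    intro i hi i' hi' hb
    simp only [Finset.coe_filter, Set.mem_setOf_eq] at hi hi'
    funext m
    have e1 : ((i m).val : ZMod q) = j m := by
      have := congrFun hi.2 m
      simpa only [hπ] using this
    have e2 : ((i' m).val : ZMod q) = j m := by
      have := congrFun hi'.2 m
      simpa only [hπ] using this
    have k1 := hkey (i m) (j m) e1
    have k2 := hkey (i' m) (j m) e2
    have hbm : ((i m).val = (j m).val) ↔ ((i' m).val = (j m).val) := by
      have := congrFun hb m
      simpa [decide_eq_decide] using this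
    exact Fin.ext (by omega)
  have hScard : (Sset σ q).card = q ^ (k + 1) := card_Sset σ q hinv hnfix hk
  -- (4) bound on solutions with some zero coordinate
  have hbadS : ((Sset σ q).filter (fun j => ¬ ∀ m, j m ≠ 0)).card ≤ 2 * k * q ^ k := by
    calc ((Sset σ q).filter (fun j => ¬ ∀ m, j m ≠ 0)).card
        ≤ ((univ : Finset (Fin (2 * k))).biUnion
          (fun m => (Sset σ q).filter (fun j => j m = 0))).card := by
          apply Finset.card_le_card
          intro j hj
          rw [Finset.mem_filter] at hj
          obtain ⟨hj1, hj2⟩ := hj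
          push_neg at hj2
          obtain ⟨m, hm⟩ := hj2
          exact Finset.mem_biUnion.mpr ⟨m, Finset.mem_univ _, Finset.mem_filter.mpr ⟨hj1, hm⟩⟩
      _ ≤ ∑ m : Fin (2 * k), ((Sset σ q).filter (fun j => j m = 0)).card :=
          Finset.card_biUnion_le
      _ ≤ ∑ _m : Fin (2 * k), q ^ k :=
          Finset.sum_le_sum (fun m _ => card_Sset_zero σ q hinv hnfix hk m)
      _ = 2 * k * q ^ k := by
          rw [Finset.sum_const, Finset.card_univ, Fintype.card_fin, smul_eq_mul]
  -- (5) upper bound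
  have hupper : T.card ≤ q ^ (k + 1) + 2 ^ (2 * k) * (2 * k * q ^ k) := by
    have hsplit := Finset.card_filter_add_card_filter_not
      (s := T) (p := fun i => ∀ m, π i m ≠ 0)
    have hgood : (T.filter (fun i => ∀ m, π i m ≠ 0)).card ≤ q ^ (k + 1) := by
      rw [← hScard]
      apply Finset.card_le_card_of_injOn π
      · intro i hi
        exact hmapS i (Finset.mem_filter.mp hi).1
      · intro i hi i' hi' hpi
        simp only [Finset.coe_filter, Set.mem_setOf_eq] at hi hi'
        funext m
        have e1 : π i m = π i' m := congrFun hpi m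
        have hne : π i m ≠ 0 := hi.2 m
        have k1 := hkey (i m) (π i m) (by rw [hπ])
        have k2 := hkey (i' m) (π i m) (by rw [e1, hπ])
        have hv : (π i m).val ≠ 0 := fun h => hne ((ZMod.val_eq_zero _).mp h)
        have hi1 : (i m).val < N := (i m).isLt
        have hi2 : (i' m).val < N := (i' m).isLt
        exact Fin.ext (by clear hsplit hbadS; omega)
    have hbad : (T.filter (fun i => ¬ ∀ m, π i m ≠ 0)).card
        ≤ 2 ^ (2 * k) * (2 * k * q ^ k) := by
      have hmaps : ∀ i ∈ T.filter (fun i => ¬ ∀ m, π i m ≠ 0),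
          π i ∈ (Sset σ q).filter (fun j => ¬ ∀ m, j m ≠ 0) := by
        intro i hi
        rw [Finset.mem_filter] at hi ⊢
        exact ⟨hmapS i hi.1, hi.2⟩
      calc (T.filter (fun i => ¬ ∀ m, π i m ≠ 0)).card
          = ∑ j ∈ (Sset σ q).filter (fun j => ¬ ∀ m, j m ≠ 0),
              ((T.filter (fun i => ¬ ∀ m, π i m ≠ 0)).filter (fun i => π i = j)).card :=
            Finset.card_eq_sum_card_fiberwise hmaps
        _ ≤ ∑ _j ∈ (Sset σ q).filter (fun j => ¬ ∀ m, j m ≠ 0), 2 ^ (2 * k) := by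
            apply Finset.sum_le_sum
            intro j _
            refine le_trans (Finset.card_le_card ?_) (hfiber j)
            intro i hi
            rw [Finset.mem_filter] at hi ⊢
            exact ⟨(Finset.mem_filter.mp hi.1).1, hi.2⟩
        _ = ((Sset σ q).filter (fun j => ¬ ∀ m, j m ≠ 0)).card * 2 ^ (2 * k) := by
            rw [Finset.sum_const, smul_eq_mul]
        _ ≤ (2 * k * q ^ k) * 2 ^ (2 * k) := Nat.mul_le_mul_right _ hbadS
        _ = 2 ^ (2 * k) * (2 * k * q ^ k) := by ring
    rw [← hsplit]
    exact Nat.add_le_add hgood hbad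
  -- (6) lower bound
  have hlower : q ^ (k + 1) ≤ T.card + 2 * k * q ^ k := by
    have hsplit := Finset.card_filter_add_card_filter_not
      (s := Sset σ q) (p := fun j => ∀ m, j m ≠ 0)
    have hgoodS : ((Sset σ q).filter (fun j => ∀ m, j m ≠ 0)).card ≤ T.card := by
      apply Finset.card_le_card_of_injOn
        (fun j => fun m => (⟨(j m).val, lt_of_lt_of_le (ZMod.val_lt _) hqleN⟩ : Fin N))
      · intro j hj
        clear hsplit hbadS hupper
        rw [Finset.mem_coe, Finset.mem_filter] at hj
        obtain ⟨hjS, hjne⟩ := hj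
        rw [Finset.mem_coe, hTdef, Finset.mem_filter]
        refine ⟨Finset.mem_univ _, ?_⟩
        intro m
        rw [mem_Sset_iff] at hjS
        have hval : ∀ x : Fin (2 * k), 1 ≤ (j x).val ∧ (j x).val < q := by
          intro x
          have hvne : (j x).val ≠ 0 := fun h => hjne x ((ZMod.val_eq_zero _).mp h)
          have := ZMod.val_lt (j x)
          omega
        have hdvd : (q : ℤ) ∣ (((j (cyc m)).val : ℤ) - ((j m).val : ℤ)
            + (((j (cyc (σ m))).val : ℤ) - ((j (σ m)).val : ℤ))) := by
          rw [← ZMod.intCast_zmod_eq_zero_iff_dvd]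
          push_cast
          have e : ∀ x : Fin (2 * k), (((j x).val : ℕ) : ZMod q) = j x :=
            fun x => ZMod.natCast_rightInverse (j x)
          simp only [e]
          linear_combination hjS m
        obtain ⟨c, hcq⟩ := hdvd
        have b1 := hval (cyc m)
        have b2 := hval m
        have b3 := hval (cyc (σ m))
        have b4 := hval (σ m)
        have hub : (((j (cyc m)).val : ℤ) - ((j m).val : ℤ)
            + (((j (cyc (σ m))).val : ℤ) - ((j (σ m)).val : ℤ))) ≤ 2 * q - 4 := by omega
        have hlb : -(2 * (q : ℤ) - 4) ≤ (((j (cyc m)).val : ℤ) - ((j m).val : ℤ)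
            + (((j (cyc (σ m))).val : ℤ) - ((j (σ m)).val : ℤ))) := by omega
        rw [hcq] at hub hlb
        have hqZ : (1 : ℤ) ≤ (q : ℤ) := by exact_mod_cast hq1
        have hcb : c = 0 ∨ c = 1 ∨ c = -1 := by
          have hc2 : c < 2 := by nlinarith
          have hc3 : -2 < c := by nlinarith
          omega
        refine ⟨(q : ℤ) * c, ?_, ?_⟩
        · rcases hcb with rfl | rfl | rfl
          · exact Or.inl (by ring)
          · refine Or.inr (Or.inl ?_)
            rw [mul_one, hcast]
          · refine Or.inr (Or.inr ?_)
            rw [hcast]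
            ring
        · simp only [Fin.val_mk]
          linarith [hcq]
      · intro j hj j' hj' he
        funext m
        have hm := congrFun he m
        simp only [Fin.mk.injEq] at hm
        exact ZMod.val_injective q hm
    rw [hScard] at hsplit
    linarith [hsplit, hgoodS, hbadS]
  -- (7) final arithmetic
  clear hbadS hfiber hmapS
  have hqN : q ^ k ≤ N ^ k := Nat.pow_le_pow_left hqleN _
  have hq1N : q ^ (k + 1) ≤ N ^ (k + 1) := Nat.pow_le_pow_left hqleN _
  have hgap : N ^ (k + 1) ≤ q ^ (k + 1) + (k + 1) * N ^ k := by
    rw [hNq]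
    exact pow_gap q k
  have h2p : 1 ≤ 2 ^ (2 * k) := Nat.one_le_two_pow
  have ha1 : 2 * k * q ^ k + (k + 1) * N ^ k ≤ Ctot * N ^ k := by
    have : 2 * k * q ^ k ≤ 2 * k * 2 ^ (2 * k) * N ^ k := by
      calc 2 * k * q ^ k ≤ 2 * k * N ^ k := Nat.mul_le_mul_left _ hqN
        _ ≤ 2 * k * 2 ^ (2 * k) * N ^ k := by
            apply Nat.mul_le_mul_right
            calc 2 * k = 2 * k * 1 := by ring
              _ ≤ 2 * k * 2 ^ (2 * k) := Nat.mul_le_mul_left _ h2p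
    rw [hCtot]
    nlinarith
  have ha2 : 2 ^ (2 * k) * (2 * k * q ^ k) ≤ Ctot * N ^ k := by
    have : 2 ^ (2 * k) * (2 * k * q ^ k) ≤ 2 * k * 2 ^ (2 * k) * N ^ k := by
      calc 2 ^ (2 * k) * (2 * k * q ^ k) = 2 * k * 2 ^ (2 * k) * q ^ k := by ring
        _ ≤ 2 * k * 2 ^ (2 * k) * N ^ k := Nat.mul_le_mul_left _ hqN
    rw [hCtot]
    nlinarith
  have HA : N ^ (k + 1) ≤ T.card + Ctot * N ^ k := by
    linarith [hgap, hlower, ha1]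
  have HB : T.card ≤ N ^ (k + 1) + Ctot * N ^ k := by
    linarith [hupper, hq1N, ha2]
  have RA : ((N : ℝ)) ^ (k + 1) ≤ (T.card : ℝ) + (Ctot : ℝ) * (N : ℝ) ^ k := by
    exact_mod_cast HA
  have RB : (T.card : ℝ) ≤ (N : ℝ) ^ (k + 1) + (Ctot : ℝ) * (N : ℝ) ^ k := by
    exact_mod_cast HB
  rw [abs_le]
  constructor
  · linarith
  · linarith

end
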